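/- Let α be Diophantine of type (c, γ) with γ ≥ 2, and let φ : ℝ/ℤ → ℂ be a function whose Fourier coefficients satisfy |φ̂(n)| ≤ C|n|^{−r} for all nonzero n, where r > γ − 1/2. Then the series ∑_{n ∈ ℤ \{0}} |φ̂(n)|² / (1 − cos(2παn)) converges. -/

import Mathlib

open Real

lemma one_sub_cos_ge (x : ℝ) : 8 * (x - round x)^2 ≤ 1 - Real.cos (2 * π * x) := by
  set t := x - round x with ht
  have hper : Real.cos (2 * π * x) = Real.cos (2 * π * t) := by
    have : 2 * π * x = 2 * π * t + (round x : ℤ) * (2 * π) := by ring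
    rw [this, Real.cos_add_int_mul_two_pi]
  rw [hper]
  have habs : |t| ≤ 1/2 := abs_sub_round x
  have h1 : 2 * |t| ≤ Real.sin (π * |t|) := by
    have := Real.mul_le_sin (x := π * |t|) (by positivity)
      (by nlinarith [Real.pi_pos])
    calc 2 * |t| = 2 / π * (π * |t|) := by field_simp
    _ ≤ _ := this
  have hsq : Real.sin (π * t) ^ 2 = Real.sin (π * |t|) ^ 2 := by
    rcases abs_cases t with ⟨h, _⟩ | ⟨h, _⟩
    · rw [h]
    · rw [h]; simp [mul_neg]
  have hcos : Real.cos (2 * π * t) = 1 - 2 * Real.sin (π * t) ^ 2 := by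
    have : Real.cos (2 * (π * t)) = 2 * Real.cos (π * t) ^ 2 - 1 := Real.cos_two_mul _
    rw [show 2 * π * t = 2 * (π * t) by ring, this]
    nlinarith [Real.sin_sq_add_cos_sq (π * t)]
  rw [hcos]
  have h2 : (2 * |t|)^2 ≤ Real.sin (π * |t|) ^ 2 := by
    nlinarith [abs_nonneg t]
  have h3 : t^2 = |t|^2 := (sq_abs t).symm
  nlinarith

set_option maxHeartbeats 1000000 in
lemma rpow_sq (x a : ℝ) (hx : 0 ≤ x) : (x ^ a)^2 = x ^ (2*a) := by
  rw [← Real.rpow_natCast (x^a) 2, ← Real.rpow_mul hx]; norm_num [mul_comm]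

/-- If `α` is Diophantine of type `(c, γ)` (`γ ≥ 2`) and the Fourier coefficients of
`φ : ℝ/ℤ → ℂ` satisfy `|φ̂(n)| ≤ C·|n|^(−r)` with `r > γ − 1/2`, then
`∑_{n ≠ 0} |φ̂(n)|² / (1 − cos (2παn))` converges. -/
theorem stmt3 (α c γ r C : ℝ) (hc : 0 < c) (hγ : 2 ≤ γ) (hr : γ - 1/2 < r)
    (hdioph : ∀ p q : ℤ, q ≠ 0 → c / |(q : ℝ)| ^ γ ≤ |α - (p : ℝ) / q|)
    (φ : AddCircle (1 : ℝ) → ℂ)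
    (hφ : ∀ n : ℤ, n ≠ 0 →
      ‖fourierCoeff φ n‖ ≤ C * |(n : ℝ)| ^ (-r)) :
    Summable (fun n : {n : ℤ // n ≠ 0} =>
      ‖fourierCoeff φ (n : ℤ)‖ ^ 2 / (1 - Real.cos (2 * π * α * (n : ℤ)))) := by
  have hC : 0 ≤ C := by
    have h1 := (norm_nonneg _).trans (hφ 1 one_ne_zero)
    simpa using h1
  set b : ℝ := 2*r - 2*γ + 2 with hb
  have hb1 : (1:ℝ) < b := by simp only [hb]; linarith
  -- denominator lower bound
  have hden : ∀ n : ℤ, n ≠ 0 →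
      8 * c^2 * |(n:ℝ)| ^ (2*(1-γ)) ≤ 1 - Real.cos (2*π*α*(n:ℝ)) := by
    intro n hn
    have hnpos : (0:ℝ) < |(n:ℝ)| := abs_pos.mpr (Int.cast_ne_zero.mpr hn)
    have hkey := hdioph (round (α * n)) n hn
    have heq : |α - (round (α*n) : ℝ) / n| * |(n:ℝ)| = |α * n - round (α*n)| := by
      rw [← abs_mul]
      congr 1
      field_simp
    have h1 : c * |(n:ℝ)| ^ (1-γ) ≤ |α * n - round (α*n)| := by
      rw [← heq]
      have : c * |(n:ℝ)| ^ (1-γ) = c / |(n:ℝ)|^γ * |(n:ℝ)| := by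
        rw [Real.rpow_sub hnpos, Real.rpow_one]; ring
      rw [this]
      exact mul_le_mul_of_nonneg_right hkey hnpos.le
    have h2 := one_sub_cos_ge (α * n)
    have h3 : (c * |(n:ℝ)| ^ (1-γ))^2 ≤ (α * n - round (α*n))^2 := by
      rw [← sq_abs (α * n - _)]
      exact pow_le_pow_left₀ (by positivity) h1 2
    have h4 : (|(n:ℝ)| ^ (1-γ))^2 = |(n:ℝ)| ^ (2*(1-γ)) := rpow_sq _ _ hnpos.le
    have harg : 2*π*α*(n:ℝ) = 2*π*(α*n) := by ring
    rw [harg]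
    nlinarith [h2, h3]
  -- comparison
  apply Summable.of_nonneg_of_le
    (f := fun n : {n : ℤ // n ≠ 0} => C^2 / (8*c^2) * |((n:ℤ):ℝ)| ^ (-b))
  · intro n
    have hd := hden n n.2
    have hnpos : (0:ℝ) < |((n:ℤ):ℝ)| := abs_pos.mpr (Int.cast_ne_zero.mpr n.2)
    have hdpos : (0:ℝ) < 1 - Real.cos (2*π*α*((n:ℤ):ℝ)) :=
      lt_of_lt_of_le (by positivity) hd
    positivity
  · intro n
    have hnpos : (0:ℝ) < |((n:ℤ):ℝ)| := abs_pos.mpr (Int.cast_ne_zero.mpr n.2)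
    have hd := hden n n.2
    have hdbpos : (0:ℝ) < 8 * c^2 * |((n:ℤ):ℝ)| ^ (2*(1-γ)) := by positivity
    have hnum : ‖fourierCoeff φ (n:ℤ)‖ ^ 2 ≤ C^2 * |((n:ℤ):ℝ)| ^ (-(2*r)) := by
      have := pow_le_pow_left₀ (norm_nonneg _) (hφ n n.2) 2
      calc ‖fourierCoeff φ (n:ℤ)‖ ^ 2 ≤ (C * |((n:ℤ):ℝ)| ^ (-r))^2 := this
      _ = C^2 * (|((n:ℤ):ℝ)| ^ (-r))^2 := by ring
      _ = C^2 * |((n:ℤ):ℝ)| ^ (-(2*r)) := by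
          rw [rpow_sq _ _ hnpos.le]; ring_nf
    calc ‖fourierCoeff φ (n:ℤ)‖ ^ 2 / (1 - Real.cos (2*π*α*((n:ℤ):ℝ)))
        ≤ (C^2 * |((n:ℤ):ℝ)| ^ (-(2*r))) / (8 * c^2 * |((n:ℤ):ℝ)| ^ (2*(1-γ))) :=
          div_le_div₀ (by positivity) hnum hdbpos hd
      _ = C^2 / (8*c^2) * |((n:ℤ):ℝ)| ^ (-b) := by
          rw [div_mul_eq_div_div_swap, mul_div_assoc, ← Real.rpow_sub hnpos,
            show -(2*r) - 2*(1-γ) = -b by simp only [hb]; ring]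
          ring
  · exact ((summable_abs_int_rpow hb1).mul_left _).subtype _
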